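/- Let τ > 0 and σ ∈ (0,1), and define G(x) = ( (τ + σ·(1 + 2x))² + 4x(x+1)(1 − σ²) )^{−1/2} for x ≥ 0. Then there exists a constant C > 0 (depending on τ and σ) such that for all x ≥ 0: |G(x)| ≤ C·(x² + 1)^{−1/2}, (x+1)·|G′(x)| ≤ C·(x² + 1)^{−1/2}, and x(x+1)·|G″(x)| ≤ C·(x² + 1)^{−1/2}. -/

import Mathlib

/-- The function `G(x) = ((τ + σ(1+2x))² + 4x(x+1)(1−σ²))^{−1/2}`, i.e.
`((τ + sin α₂ cosh t)² + sinh²t cos²α₂)^{−1/2}` in the variable `x = sinh²(t/2)`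
with `σ = sin α₂`. -/
noncomputable def Gfun (τ σ : ℝ) (x : ℝ) : ℝ :=
  (Real.sqrt ((τ + σ * (1 + 2*x))^2 + 4*x*(x+1)*(1 - σ^2)))⁻¹

noncomputable def Qf (τ σ : ℝ) (y : ℝ) : ℝ :=
  (τ + σ * (1 + 2*y))^2 + 4*y*(y+1)*(1 - σ^2)

lemma Gfun_eq (τ σ x : ℝ) : Gfun τ σ x = (Real.sqrt (Qf τ σ x))⁻¹ := rfl

lemma Qf_eq (τ σ y : ℝ) : Qf τ σ y = 4*y^2 + 4*(σ*τ+1)*y + (τ+σ)^2 := by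
  unfold Qf; ring

lemma Qf_hasDeriv (τ σ y : ℝ) : HasDerivAt (Qf τ σ) (8*y + 4*(σ*τ+1)) y := by
  have h : HasDerivAt (fun y : ℝ => 4*y^2 + 4*(σ*τ+1)*y + (τ+σ)^2) (8*y + 4*(σ*τ+1)) y := by
    have h1 := ((hasDerivAt_pow 2 y).const_mul (4:ℝ)).add
      (((hasDerivAt_id y).const_mul (4*(σ*τ+1))).add_const ((τ+σ)^2))
    have e1 : (fun y : ℝ => 4*y^2 + 4*(σ*τ+1)*y + (τ+σ)^2) =
        ((fun y => 4 * y ^ 2) + fun x => 4 * (σ * τ + 1) * id x + (τ + σ) ^ 2) := by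
      funext z; simp only [Pi.add_apply, id]; ring
    rw [e1]
    exact h1.congr_deriv (by push_cast; ring)
  have hfun : Qf τ σ = fun y : ℝ => 4*y^2 + 4*(σ*τ+1)*y + (τ+σ)^2 := funext fun y => Qf_eq τ σ y
  rw [hfun]
  exact h

lemma Qf_cont (τ σ : ℝ) : Continuous (Qf τ σ) := by
  unfold Qf; fun_prop

lemma Gfun_hasDeriv (τ σ y : ℝ) (h : 0 < Qf τ σ y) :
    HasDerivAt (Gfun τ σ) (-(8*y + 4*(σ*τ+1)) / (2*(Real.sqrt (Qf τ σ y))^3)) y := by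
  have hs : Real.sqrt (Qf τ σ y) ≠ 0 := ne_of_gt (Real.sqrt_pos.mpr h)
  have h1 := ((Qf_hasDeriv τ σ y).sqrt (ne_of_gt h)).inv hs
  have hfun : Gfun τ σ = fun y => (Real.sqrt (Qf τ σ y))⁻¹ := rfl
  rw [hfun]
  refine h1.congr_deriv ?_
  have hsq : Real.sqrt (Qf τ σ y)^2 = Qf τ σ y := Real.sq_sqrt h.le
  field_simp

lemma g1_hasDeriv (τ σ x : ℝ) (h : 0 < Qf τ σ x) :
    HasDerivAt (fun y => -(8*y + 4*(σ*τ+1)) / (2*(Real.sqrt (Qf τ σ y))^3))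
      ((3*(8*x+4*(σ*τ+1))^2 - 16*Qf τ σ x) / (4*(Qf τ σ x)^2 * Real.sqrt (Qf τ σ x))) x := by
  have hs0 : 0 < Real.sqrt (Qf τ σ x) := Real.sqrt_pos.mpr h
  have hsq : Real.sqrt (Qf τ σ x)^2 = Qf τ σ x := Real.sq_sqrt h.le
  have hnum : HasDerivAt (fun y : ℝ => -(8*y + 4*(σ*τ+1))) (-8) x := by
    have h1 := (((hasDerivAt_id x).const_mul (8:ℝ)).add_const (4*(σ*τ+1))).neg
    exact h1.congr_deriv (by ring)
  have hden := (((Qf_hasDeriv τ σ x).sqrt (ne_of_gt h)).pow 3).const_mul (2:ℝ)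
  have hd := hnum.div hden (by simp only [Pi.pow_apply]; exact mul_ne_zero two_ne_zero (pow_ne_zero 3 hs0.ne'))
  refine hd.congr_deriv ?_
  simp only [Pi.pow_apply]
  set s := Real.sqrt (Qf τ σ x) with hsdef
  rw [← hsq]
  field_simp
  ring

lemma aux_quad (τ σ x : ℝ) (hst : 0 ≤ σ*τ+1) :
    4*x^2 + 4*(σ*τ+1)*x + (τ+σ)^2 ≤ (4 + 4*(σ*τ+1) + (τ+σ)^2)*(x^2+1) := by
  nlinarith [mul_nonneg hst (sq_nonneg (2*x-1)), sq_nonneg (x*(τ+σ))]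

lemma aux_xx (x : ℝ) : x*(x+1) ≤ 2*(x^2+1) := by nlinarith [sq_nonneg (2*x-1)]

set_option maxHeartbeats 2000000 in
/-- decay bounds for `G` and its first two derivatives. -/
theorem stmt_19 (τ σ : ℝ) (hτ : 0 < τ) (hσ : σ ∈ Set.Ioo (0:ℝ) 1) :
    ∃ C : ℝ, 0 < C ∧ ∀ x : ℝ, 0 ≤ x →
      |Gfun τ σ x| ≤ C * (Real.sqrt (x^2 + 1))⁻¹ ∧
      (x + 1) * |deriv (Gfun τ σ) x| ≤ C * (Real.sqrt (x^2 + 1))⁻¹ ∧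
      x * (x + 1) * |deriv (deriv (Gfun τ σ)) x| ≤ C * (Real.sqrt (x^2 + 1))⁻¹ := by
  obtain ⟨hσ0, hσ1⟩ := hσ
  have hτσ : 0 < τ + σ := by linarith
  have hst : 0 < σ*τ + 1 := by nlinarith
  have hQpos : ∀ y : ℝ, 0 ≤ y → 0 < Qf τ σ y := by
    intro y hy
    rw [Qf_eq]
    nlinarith [sq_nonneg y, sq_nonneg (τ+σ)]
  set m : ℝ := min 4 ((τ+σ)^2) with hmdef
  have hm : 0 < m := lt_min (by norm_num) (by positivity)
  set c : ℝ := Real.sqrt m with hcdef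
  have hc : 0 < c := Real.sqrt_pos.mpr hm
  have hc2 : c^2 = m := Real.sq_sqrt hm.le
  set M : ℝ := 8 + 4*(σ*τ+1) with hMdef
  have hM : 0 < M := by positivity
  set K : ℝ := 4 + 4*(σ*τ+1) + (τ+σ)^2 with hKdef
  have hK : 0 < K := by positivity
  set S : ℝ := 9 + M + 3*M^2 + 8*K with hSdef
  have hS : 0 < S := by positivity
  set C : ℝ := S * (c⁻¹ + c⁻¹^3 + c⁻¹^5) with hCdef
  have hic : c⁻¹ * c = 1 := inv_mul_cancel₀ hc.ne'
  have hC0 : 0 < C := by positivity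
  have hic3 : c⁻¹^3 * c^3 = 1 := by rw [← mul_pow, hic, one_pow]
  have hic5 : c⁻¹^5 * c^5 = 1 := by rw [← mul_pow, hic, one_pow]
  have hi0 : 0 < c⁻¹ := inv_pos.mpr hc
  have hCc1 : S ≤ C * c := by
    have h1 : S * (c⁻¹ * c) = S := by rw [hic, mul_one]
    nlinarith [h1, mul_pos hS (mul_pos (pow_pos hi0 3) hc), mul_pos hS (mul_pos (pow_pos hi0 5) hc)]
  have hCc3 : S ≤ C * c^3 := by
    have h1 : S * (c⁻¹^3 * c^3) = S := by rw [hic3, mul_one]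
    nlinarith [h1, mul_pos hS (mul_pos hi0 (pow_pos hc 3)), mul_pos hS (mul_pos (pow_pos hi0 5) (pow_pos hc 3))]
  have hCc5 : S ≤ C * c^5 := by
    have h1 : S * (c⁻¹^5 * c^5) = S := by rw [hic5, mul_one]
    nlinarith [h1, mul_pos hS (mul_pos hi0 (pow_pos hc 5)), mul_pos hS (mul_pos (pow_pos hi0 3) (pow_pos hc 5))]
  refine ⟨C, hC0, ?_⟩
  intro x hx
  set u : ℝ := Real.sqrt (x^2+1) with hudef
  have hu2 : u^2 = x^2+1 := Real.sq_sqrt (by positivity)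
  have hu1 : 1 ≤ u := by
    rw [show (1:ℝ) = Real.sqrt 1 from Real.sqrt_one.symm]
    exact Real.sqrt_le_sqrt (by nlinarith)
  have hu0 : 0 < u := lt_of_lt_of_le one_pos hu1
  have hQx : 0 < Qf τ σ x := hQpos x hx
  set s : ℝ := Real.sqrt (Qf τ σ x) with hsdef
  have hs0 : 0 < s := Real.sqrt_pos.mpr hQx
  have hs2 : s^2 = Qf τ σ x := Real.sq_sqrt hQx.le
  have hscu : c*u ≤ s := by
    have h1 : m*(x^2+1) ≤ Qf τ σ x := by
      rw [Qf_eq]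
      have h4 : m ≤ 4 := min_le_left _ _
      have h5 : m ≤ (τ+σ)^2 := min_le_right _ _
      nlinarith [sq_nonneg x]
    calc c*u = Real.sqrt (m*(x^2+1)) := (Real.sqrt_mul hm.le _).symm
      _ ≤ s := Real.sqrt_le_sqrt h1
  set A : ℝ := 8*x + 4*(σ*τ+1) with hAdef
  have hA0 : 0 ≤ A := by positivity
  have hAle : A ≤ M*(x+1) := by nlinarith
  have hx1u : (x+1)^2 ≤ 2*u^2 := by nlinarith [sq_nonneg (x-1)]
  have hCinv : C * u⁻¹ = C / u := by rw [div_eq_mul_inv]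
  refine ⟨?_, ?_, ?_⟩
  · -- |G| ≤ C/u
    rw [Gfun_eq, ← hsdef, abs_of_pos (inv_pos.mpr hs0), hCinv,
      show s⁻¹ = 1/s from (one_div s).symm, div_le_div_iff₀ hs0 hu0]
    have hS1 : 1 ≤ S := by linarith [hM, hK, sq_nonneg M]
    linarith [mul_le_mul_of_nonneg_left hscu hC0.le,
      mul_le_mul_of_nonneg_right hCc1 hu0.le,
      mul_le_mul_of_nonneg_right hS1 hu0.le]
  · -- first derivative
    rw [(Gfun_hasDeriv τ σ x hQx).deriv, ← hsdef, ← hAdef, abs_div, abs_neg,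
      abs_of_nonneg hA0, abs_of_pos (by positivity : (0:ℝ) < 2*s^3), hCinv,
      show (x+1) * (A/(2*s^3)) = ((x+1)*A)/(2*s^3) from by ring,
      div_le_div_iff₀ (by positivity) hu0]
    have hs3 : (c*u)^3 ≤ s^3 := pow_le_pow_left₀ (by positivity) hscu 3
    have e1 : (x+1)*A*u ≤ M*(x+1)^2*u := by linarith [mul_le_mul_of_nonneg_left hAle (mul_nonneg (by linarith : (0:ℝ) ≤ x+1) hu0.le)]
    have e2 : M*(x+1)^2*u ≤ 2*M*u^3 := by linarith [mul_le_mul_of_nonneg_left hx1u (mul_nonneg hM.le hu0.le)]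
    have hMS : M ≤ S := by linarith [hK, sq_nonneg M]
    have e3 : 2*M*u^3 ≤ 2*(C*c^3)*u^3 := by
      linarith [mul_le_mul_of_nonneg_right (hMS.trans hCc3) (pow_pos hu0 3).le]
    have e4 : 2*C*(c*u)^3 ≤ 2*C*s^3 := by linarith [mul_le_mul_of_nonneg_left hs3 hC0.le]
    calc (x+1)*A*u ≤ 2*(C*c^3)*u^3 := by linarith
      _ = 2*C*(c*u)^3 := by ring
      _ ≤ 2*C*s^3 := e4
      _ = C*(2*s^3) := by ring
  · -- second derivative
    have hU : IsOpen {y : ℝ | 0 < Qf τ σ y} := isOpen_lt continuous_const (Qf_cont τ σ)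
    have hev : deriv (Gfun τ σ) =ᶠ[nhds x]
        (fun y => -(8*y + 4*(σ*τ+1)) / (2*(Real.sqrt (Qf τ σ y))^3)) := by
      filter_upwards [hU.mem_nhds hQx] with y hy using (Gfun_hasDeriv τ σ y hy).deriv
    rw [hev.deriv_eq, (g1_hasDeriv τ σ x hQx).deriv, ← hsdef, ← hAdef]
    have hQeq : Qf τ σ x = s^2 := hs2.symm
    rw [hQeq]
    have habs : |(3*A^2 - 16*s^2)/(4*(s^2)^2*s)| ≤ (3*A^2 + 16*s^2)/(4*(s^2)^2*s) := by
      rw [abs_div, abs_of_pos (by positivity : (0:ℝ) < 4*(s^2)^2*s)]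
      gcongr
      exact abs_le.mpr ⟨by linarith [sq_nonneg A, sq_nonneg s], by linarith [sq_nonneg A, sq_nonneg s]⟩
    have hstep := mul_le_mul_of_nonneg_left habs (show (0:ℝ) ≤ x*(x+1) by positivity)
    refine le_trans hstep ?_
    rw [hCinv, show x*(x+1)*((3*A^2+16*s^2)/(4*(s^2)^2*s)) = (x*(x+1)*(3*A^2+16*s^2))/(4*s^5) from by ring,
      div_le_div_iff₀ (by positivity) hu0]
    have hA2 : A^2 ≤ 2*M^2*u^2 := by
      linarith [mul_self_le_mul_self hA0 hAle, mul_le_mul_of_nonneg_left hx1u (sq_nonneg M)]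
    have hs2u : s^2 ≤ K*u^2 := by
      rw [hs2, Qf_eq, hu2, hKdef]
      exact aux_quad τ σ x hst.le
    have hxx : x*(x+1) ≤ 2*u^2 := by rw [hu2]; exact aux_xx x
    have hnum : x*(x+1)*(3*A^2+16*s^2) ≤ (12*M^2+32*K)*u^4 := by
      have h1 : 3*A^2+16*s^2 ≤ (6*M^2+16*K)*u^2 := by linarith [hA2, hs2u]
      calc x*(x+1)*(3*A^2+16*s^2) ≤ (2*u^2)*((6*M^2+16*K)*u^2) :=
            mul_le_mul hxx h1 (by positivity) (by positivity)
        _ = (12*M^2+32*K)*u^4 := by ring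
    have hs5 : (c*u)^5 ≤ s^5 := pow_le_pow_left₀ (by positivity) hscu 5
    have hfin : (12*M^2+32*K)*u^5 ≤ C*(4*s^5) := by
      have hMS2 : 12*M^2+32*K ≤ 4*S := by linarith [hM]
      have h2 : (12*M^2+32*K)*u^5 ≤ 4*S*u^5 := by
        linarith [mul_le_mul_of_nonneg_right hMS2 (pow_pos hu0 5).le]
      have h3 : 4*S*u^5 ≤ 4*(C*c^5)*u^5 := by
        linarith [mul_le_mul_of_nonneg_right hCc5 (pow_pos hu0 5).le]
      have h4 : 4*C*(c*u)^5 ≤ 4*C*s^5 := by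
        linarith [mul_le_mul_of_nonneg_left hs5 hC0.le]
      calc (12*M^2+32*K)*u^5 ≤ 4*(C*c^5)*u^5 := by linarith
        _ = 4*C*(c*u)^5 := by ring
        _ ≤ 4*C*s^5 := h4
        _ = C*(4*s^5) := by ring
    calc x*(x+1)*(3*A^2+16*s^2)*u ≤ ((12*M^2+32*K)*u^4)*u :=
          mul_le_mul_of_nonneg_right hnum hu0.le
      _ = (12*M^2+32*K)*u^5 := by ring
      _ ≤ C*(4*s^5) := hfin
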